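/- arXiv:math/0509193 — 3 statements merged into one kernel-verified Lean document; each statement's English description precedes it below -/
import Mathlib

section
/- (Local Harnack inequality) Let L = A + W with a_{x,y}>0 symmetric and W ≥ 0. Let V₁ ⊂ V and suppose x ∼ y with x, y ∈ int(V₁). If Lf ≥ 0 on int(V₁) and f > 0 on V₁, then a_{x,y}/(W(x)+Σ_{z∼x}a_{x,z}) ≤ f(x)/f(y) ≤ (W(y)+Σ_{z∼y}a_{y,z})/a_{x,y}. -/
open scoped BigOperators Classical

/-- The elliptic operator `A f (x) = ∑_{y ~ x} a x y * (f x - f y)` (real-valued functions). -/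
noncomputable def opA {V : Type*} (G : SimpleGraph V) [G.LocallyFinite] (a : V → V → ℝ)
    (f : V → ℝ) (x : V) : ℝ :=
  ∑ y ∈ G.neighborFinset x, a x y * (f x - f y)

/-- The elliptic operator on complex-valued functions. -/
noncomputable def opAC {V : Type*} (G : SimpleGraph V) [G.LocallyFinite] (a : V → V → ℝ)
    (f : V → ℂ) (x : V) : ℂ :=
  ∑ y ∈ G.neighborFinset x, (a x y : ℂ) * (f x - f y)

/-- The interior of a set of vertices: points of `S` all of whose neighbors lie in `S`. -/
def intSet {V : Type*} (G : SimpleGraph V) (S : Set V) : Set V :=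
  {x | x ∈ S ∧ ∀ y, G.Adj x y → y ∈ S}

/-- The interior of a finite set of vertices. -/
noncomputable def intFin {V : Type*} (G : SimpleGraph V) [G.LocallyFinite] (U : Finset V) :
    Finset V :=
  U.filter fun x => ∀ y ∈ G.neighborFinset x, y ∈ U

/-- Key estimate: `a x y * f y ≤ (W x + ∑ a x z) * f x` for `x` in the interior. -/
lemma key_est {V : Type*} (G : SimpleGraph V) [G.LocallyFinite]
    (a : V → V → ℝ) (hpos : ∀ x y, G.Adj x y → 0 < a x y)
    (W : V → ℝ) (V₁ : Set V) (f : V → ℝ)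
    (hf : ∀ x ∈ intSet G V₁, 0 ≤ W x * f x + opA G a f x)
    (hfpos : ∀ x ∈ V₁, 0 < f x)
    (x y : V) (hadj : G.Adj x y) (hx : x ∈ intSet G V₁) :
    a x y * f y ≤ (W x + ∑ z ∈ G.neighborFinset x, a x z) * f x := by
  have h := hf x hx
  have hsum : ∑ z ∈ G.neighborFinset x, a x z * f z
      ≤ (W x + ∑ z ∈ G.neighborFinset x, a x z) * f x := by
    have : opA G a f x = (∑ z ∈ G.neighborFinset x, a x z) * f x
        - ∑ z ∈ G.neighborFinset x, a x z * f z := by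
      simp [opA, mul_sub, Finset.sum_sub_distrib, Finset.sum_mul]
    rw [this] at h
    linarith
  refine le_trans ?_ hsum
  have hy' : y ∈ G.neighborFinset x := by simpa using hadj
  refine Finset.single_le_sum (f := fun z => a x z * f z) ?_ hy'
  intro z hz
  have hzadj : G.Adj x z := by simpa using hz
  exact le_of_lt (mul_pos (hpos x z hzadj) (hfpos z (hx.2 z hzadj)))

/-- Local Harnack inequality for positive supersolutions of L = A + W. -/
theorem local_harnack {V : Type*} (G : SimpleGraph V) [G.LocallyFinite] (hG : G.Connected)
    (a : V → V → ℝ) (hsym : ∀ x y, a x y = a y x) (hpos : ∀ x y, G.Adj x y → 0 < a x y)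
    (W : V → ℝ) (hW : ∀ x, 0 ≤ W x) (V₁ : Set V)
    (f : V → ℝ)
    (hf : ∀ x ∈ intSet G V₁, 0 ≤ W x * f x + opA G a f x)
    (hfpos : ∀ x ∈ V₁, 0 < f x)
    (x y : V) (hadj : G.Adj x y) (hx : x ∈ intSet G V₁) (hy : y ∈ intSet G V₁) :
    a x y / (W x + ∑ z ∈ G.neighborFinset x, a x z) ≤ f x / f y ∧
    f x / f y ≤ (W y + ∑ z ∈ G.neighborFinset y, a y z) / a x y := by
  have hfx : 0 < f x := hfpos x hx.1
  have hfy : 0 < f y := hfpos y hy.1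
  have haxy : 0 < a x y := hpos x y hadj
  have hDx : 0 < W x + ∑ z ∈ G.neighborFinset x, a x z := by
    have : 0 < ∑ z ∈ G.neighborFinset x, a x z := by
      refine Finset.sum_pos' (fun z hz => le_of_lt (hpos x z (by simpa using hz))) ?_
      exact ⟨y, by simpa using hadj, haxy⟩
    linarith [hW x]
  have hDy : 0 < W y + ∑ z ∈ G.neighborFinset y, a y z := by
    have : 0 < ∑ z ∈ G.neighborFinset y, a y z := by
      refine Finset.sum_pos' (fun z hz => le_of_lt (hpos y z (by simpa using hz))) ?_
      exact ⟨x, by simpa using hadj.symm, hpos y x hadj.symm⟩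
    linarith [hW y]
  have h1 := key_est G a hpos W V₁ f hf hfpos x y hadj hx
  have h2 := key_est G a hpos W V₁ f hf hfpos y x hadj.symm hy
  rw [hsym y x] at h2
  constructor
  · rw [div_le_div_iff₀ hDx hfy]
    linarith
  · rw [div_le_div_iff₀ hfy haxy]
    linarith
end

section
/- (Existence of ground state) Let L = A + W on a connected countable graph G where a_{x,y}=a_{y,x}>0 for edges, each vertex has finite valence, and W is bounded below. Let λ₀ = inf over nonzero finitely supported f of (Lf,f)/(f,f). Then there exists a function φ: V → ℝ with φ > 0 everywhere and Lφ = λ₀ φ pointwise. -/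
open scoped BigOperators Classical

open Filter Function

section Aux
variable {V : Type*} (G : SimpleGraph V) [G.LocallyFinite] (a : V → V → ℝ)

lemma opA_add (f g : V → ℝ) (x : V) :
    opA G a (fun z => f z + g z) x = opA G a f x + opA G a g x := by
  classical
  unfold opA
  rw [← Finset.sum_add_distrib]
  exact Finset.sum_congr rfl fun y _ => by ring

lemma opA_smul (t : ℝ) (f : V → ℝ) (x : V) :
    opA G a (fun z => t * f z) x = t * opA G a f x := by
  classical
  unfold opA
  rw [Finset.mul_sum]
  exact Finset.sum_congr rfl fun y _ => by ring

/-- enlarged finset containing `U` and all its neighbors -/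
noncomputable def TT (U : Finset V) : Finset V := U ∪ U.biUnion (fun x => G.neighborFinset x)

lemma subset_TT (U : Finset V) : U ⊆ TT G U := Finset.subset_union_left

lemma nbr_mem_TT {U : Finset V} {x y : V} (hx : x ∈ U) (hxy : G.Adj x y) : y ∈ TT G U := by
  apply Finset.mem_union_right
  exact Finset.mem_biUnion.2 ⟨x, hx, (SimpleGraph.mem_neighborFinset G x y).2 hxy⟩

/-- Green's identity -/
lemma green (hsym : ∀ x y, a x y = a y x) (U : Finset V) (f g : V → ℝ)
    (hg : support g ⊆ ↑U) :
    2 * ∑ x ∈ U, opA G a f x * g x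
      = ∑ x ∈ TT G U, ∑ y ∈ TT G U,
          (if G.Adj x y then a x y * (f x - f y) * (g x - g y) else 0) := by
  classical
  set T := TT G U with hT
  have hUT : U ⊆ T := subset_TT G U
  set F : (V → ℝ) → (V → ℝ) → V → V → ℝ :=
    fun f g x y => if G.Adj x y then a x y * (f x - f y) * g x else 0 with hF
  have step1 : ∀ x ∈ U, opA G a f x * g x = ∑ y ∈ T, F f g x y := by
    intro x hx
    have hsub : G.neighborFinset x ⊆ T := by
      intro y hy
      exact nbr_mem_TT G (U := U) hx ((SimpleGraph.mem_neighborFinset G x y).1 hy)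
    rw [opA, Finset.sum_mul]
    have hres : ∑ y ∈ T, F f g x y = ∑ y ∈ G.neighborFinset x, F f g x y := by
      refine (Finset.sum_subset hsub ?_).symm
      intro y _ hy
      have : ¬ G.Adj x y := fun h => hy ((SimpleGraph.mem_neighborFinset G x y).2 h)
      simp [hF, this]
    rw [hres]
    apply Finset.sum_congr rfl
    intro y hy
    have : G.Adj x y := (SimpleGraph.mem_neighborFinset G x y).1 hy
    simp [hF, this]
  have step2 : ∑ x ∈ U, opA G a f x * g x = ∑ x ∈ T, ∑ y ∈ T, F f g x y := by
    rw [Finset.sum_congr rfl step1]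
    apply Finset.sum_subset hUT
    intro x _ hx
    have hgx : g x = 0 := by
      by_contra h
      exact hx (Finset.mem_coe.1 (hg h))
    apply Finset.sum_eq_zero
    intro y _
    simp [hF, hgx]
  -- swap
  have swap : ∑ x ∈ T, ∑ y ∈ T, F f g x y
      = ∑ x ∈ T, ∑ y ∈ T, (if G.Adj x y then a x y * (f y - f x) * g y else 0) := by
    rw [Finset.sum_comm]
    apply Finset.sum_congr rfl; intro x _
    apply Finset.sum_congr rfl; intro y _
    by_cases h : G.Adj y x
    · simp only [hF, h, h.symm, if_true, hsym x y]
    · have h2 : ¬ G.Adj x y := fun hh => h hh.symm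
      simp [hF, h, h2]
  rw [step2, two_mul]
  nth_rewrite 2 [swap]
  rw [← Finset.sum_add_distrib]
  apply Finset.sum_congr rfl; intro x _
  rw [← Finset.sum_add_distrib]
  apply Finset.sum_congr rfl; intro y _
  by_cases h : G.Adj x y
  · simp only [hF, h, if_true]; ring
  · simp [hF, h]

lemma green_symm (hsym : ∀ x y, a x y = a y x) (U : Finset V) (f g : V → ℝ)
    (hf : support f ⊆ ↑U) (hg : support g ⊆ ↑U) :
    ∑ x ∈ U, opA G a f x * g x = ∑ x ∈ U, opA G a g x * f x := by
  have h1 := green G a hsym U f g hg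
  have h2 := green G a hsym U g f hf
  have : (2:ℝ) * ∑ x ∈ U, opA G a f x * g x = 2 * ∑ x ∈ U, opA G a g x * f x := by
    rw [h1, h2]
    apply Finset.sum_congr rfl; intro x _
    apply Finset.sum_congr rfl; intro y _
    by_cases h : G.Adj x y
    · simp only [h, if_true]; ring
    · simp [h]
  linarith

lemma green_nonneg (hsym : ∀ x y, a x y = a y x) (hpos : ∀ x y, G.Adj x y → 0 < a x y)
    (U : Finset V) (f : V → ℝ) (hf : support f ⊆ ↑U) :
    0 ≤ ∑ x ∈ U, opA G a f x * f x := by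
  have h1 := green G a hsym U f f hf
  have h2 : (0:ℝ) ≤ ∑ x ∈ TT G U, ∑ y ∈ TT G U,
      (if G.Adj x y then a x y * (f x - f y) * (f x - f y) else 0) := by
    apply Finset.sum_nonneg; intro x _
    apply Finset.sum_nonneg; intro y _
    by_cases h : G.Adj x y
    · simp only [h, if_true]
      have := (hpos x y h).le
      nlinarith [sq_nonneg (f x - f y)]
    · simp [h]
  linarith
lemma quad_coeff_zero (α β : ℝ) (h : ∀ t : ℝ, 0 ≤ α*t^2 + β*t) : β = 0 := by
  by_contra hb
  have hβ2 : 0 < β^2 := by positivity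
  have hd : 0 < |α| + 1 := by positivity
  have h0 := h (-β/(|α|+1))
  have key : α * (-β/(|α|+1))^2 + β * (-β/(|α|+1))
      = (β^2/((|α|+1)^2)) * (α - (|α|+1)) := by
    field_simp; ring
  have h1 : α - (|α|+1) < 0 := by linarith [le_abs_self α]
  have h2 : 0 < β^2/((|α|+1)^2) := by positivity
  nlinarith

variable (W : V → ℝ)

/-- quadratic form -/
noncomputable def Qf (U : Finset V) (f : V → ℝ) : ℝ :=
  ∑ x ∈ U, (W x * f x + opA G a f x) * f x

/-- norm form -/
noncomputable def Nf (U : Finset V) (f : V → ℝ) : ℝ := ∑ x ∈ U, f x * f x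

lemma Nf_nonneg (U : Finset V) (f : V → ℝ) : 0 ≤ Nf U f :=
  Finset.sum_nonneg fun x _ => mul_self_nonneg _

lemma Nf_smul (U : Finset V) (t : ℝ) (f : V → ℝ) :
    Nf U (fun z => t * f z) = t^2 * Nf U f := by
  unfold Nf; rw [Finset.mul_sum]; exact Finset.sum_congr rfl fun x _ => by ring

lemma Qf_smul (U : Finset V) (t : ℝ) (f : V → ℝ) :
    Qf G a W U (fun z => t * f z) = t^2 * Qf G a W U f := by
  unfold Qf; rw [Finset.mul_sum]
  refine Finset.sum_congr rfl fun x _ => ?_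
  rw [opA_smul]; ring

lemma eq_zero_of_Nf_eq_zero {U : Finset V} {f : V → ℝ} (hs : support f ⊆ ↑U)
    (h : Nf U f = 0) : f = 0 := by
  funext z
  by_cases hz : z ∈ U
  · have h1 := (Finset.sum_eq_zero_iff_of_nonneg (fun x _ => mul_self_nonneg (f x))).1 h z hz
    have h2 := mul_self_eq_zero.1 h1
    simpa using h2
  · by_contra hne
    exact hz (Finset.mem_coe.1 (hs hne))

lemma Qf_ge_c (hsym : ∀ x y, a x y = a y x) (hpos : ∀ x y, G.Adj x y → 0 < a x y)
    (c : ℝ) (hW : ∀ x, c ≤ W x) (U : Finset V) (f : V → ℝ) (hf : support f ⊆ ↑U) :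
    c * Nf U f ≤ Qf G a W U f := by
  have hsplit : Qf G a W U f
      = (∑ x ∈ U, W x * (f x * f x)) + ∑ x ∈ U, opA G a f x * f x := by
    unfold Qf; rw [← Finset.sum_add_distrib]
    exact Finset.sum_congr rfl fun x _ => by ring
  have h1 : c * Nf U f ≤ ∑ x ∈ U, W x * (f x * f x) := by
    unfold Nf; rw [Finset.mul_sum]
    exact Finset.sum_le_sum fun x _ =>
      mul_le_mul_of_nonneg_right (hW x) (mul_self_nonneg _)
  have h2 := green_nonneg G a hsym hpos U f hf
  linarith

/-- Euler–Lagrange: pointwise eigen-equation from minimality. -/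
lemma rayleigh_EL (hsym : ∀ x y, a x y = a y x) (U : Finset V) (φ : V → ℝ) (lam : ℝ)
    (hφs : support φ ⊆ ↑U) (hN : Nf U φ = 1) (hlam : lam = Qf G a W U φ)
    (hmin : ∀ f : V → ℝ, support f ⊆ ↑U → lam * Nf U f ≤ Qf G a W U f)
    {x : V} (hx : x ∈ U) :
    W x * φ x + opA G a φ x = lam * φ x := by
  classical
  set δ : V → ℝ := fun z => if z = x then 1 else 0 with hδ
  have hδs : support δ ⊆ ↑U := by
    intro z hz
    have : z = x := by by_contra h; simp [hδ, h] at hz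
    simpa [this] using hx
  set X : ℝ := ∑ z ∈ U, (W z * φ z + opA G a φ z) * δ z with hX
  have hXval : X = W x * φ x + opA G a φ x := by
    rw [hX]
    have h1 : ∀ z ∈ U, (W z * φ z + opA G a φ z) * δ z
        = if z = x then (W z * φ z + opA G a φ z) else 0 := by
      intro z _; by_cases h : z = x <;> simp [hδ, h]
    rw [Finset.sum_congr rfl h1, Finset.sum_ite_eq' U x
      (fun z => W z * φ z + opA G a φ z), if_pos hx]
  have hsymB : ∑ z ∈ U, (W z * δ z + opA G a δ z) * φ z = X := by
    rw [hX]
    have hA := green_symm G a hsym U δ φ hδs hφs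
    have hw : ∑ z ∈ U, (W z * δ z) * φ z = ∑ z ∈ U, (W z * φ z) * δ z :=
      Finset.sum_congr rfl fun z _ => by ring
    calc ∑ z ∈ U, (W z * δ z + opA G a δ z) * φ z
        = (∑ z ∈ U, (W z * δ z) * φ z) + ∑ z ∈ U, opA G a δ z * φ z := by
          rw [← Finset.sum_add_distrib]; exact Finset.sum_congr rfl fun z _ => by ring
      _ = (∑ z ∈ U, (W z * φ z) * δ z) + ∑ z ∈ U, opA G a φ z * δ z := by rw [hw, hA]
      _ = ∑ z ∈ U, (W z * φ z + opA G a φ z) * δ z := by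
          rw [← Finset.sum_add_distrib]; exact Finset.sum_congr rfl fun z _ => by ring
  have hQexp : ∀ t : ℝ, Qf G a W U (fun z => φ z + t * δ z)
      = Qf G a W U φ + t * (2 * X) + t^2 * Qf G a W U δ := by
    intro t
    have hterm : ∀ z ∈ U, (W z * (φ z + t * δ z) + opA G a (fun w => φ w + t * δ w) z)
          * (φ z + t * δ z)
        = (W z * φ z + opA G a φ z) * φ z
          + t * ((W z * φ z + opA G a φ z) * δ z + (W z * δ z + opA G a δ z) * φ z)
          + t^2 * ((W z * δ z + opA G a δ z) * δ z) := by
      intro z _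
      have h1 : opA G a (fun w => φ w + t * δ w) z
          = opA G a φ z + t * opA G a δ z := by
        rw [opA_add]
        congr 1
        exact opA_smul G a t δ z
      rw [h1]; ring
    unfold Qf
    rw [Finset.sum_congr rfl hterm]
    rw [Finset.sum_add_distrib, Finset.sum_add_distrib, ← Finset.mul_sum, ← Finset.mul_sum,
      Finset.sum_add_distrib]
    have hsymB' := hsymB
    unfold Qf at *
    rw [hsymB']
    rw [hX]
    ring
  have hNexp : ∀ t : ℝ, Nf U (fun z => φ z + t * δ z)
      = 1 + t * (2 * φ x) + t^2 := by
    intro t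
    have hNδ : ∑ z ∈ U, δ z * δ z = 1 := by
      have h1 : ∀ z ∈ U, δ z * δ z = if z = x then 1 else 0 := by
        intro z _; by_cases h : z = x <;> simp [hδ, h]
      rw [Finset.sum_congr rfl h1, Finset.sum_ite_eq' U x (fun _ => (1:ℝ)), if_pos hx]
    have hcross : ∑ z ∈ U, φ z * δ z = φ x := by
      have h1 : ∀ z ∈ U, φ z * δ z = if z = x then φ z else 0 := by
        intro z _; by_cases h : z = x <;> simp [hδ, h]
      rw [Finset.sum_congr rfl h1, Finset.sum_ite_eq' U x φ, if_pos hx]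
    have hterm : ∀ z ∈ U, (φ z + t * δ z) * (φ z + t * δ z)
        = φ z * φ z + t * (2 * (φ z * δ z)) + t^2 * (δ z * δ z) := by
      intro z _; ring
    unfold Nf at *
    rw [Finset.sum_congr rfl hterm, Finset.sum_add_distrib, Finset.sum_add_distrib,
      ← Finset.mul_sum, ← Finset.mul_sum, ← Finset.mul_sum, hN, hcross, hNδ, mul_one]
  have hquad : ∀ t : ℝ, 0 ≤ (Qf G a W U δ - lam) * t^2 + (2*X - lam * (2 * φ x)) * t := by
    intro t
    have hsupp : support (fun z => φ z + t * δ z) ⊆ ↑U := by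
      intro z hz
      by_contra h
      have h1 : φ z = 0 := by
        by_contra hh; exact h (hφs hh)
      have h2 : δ z = 0 := by
        by_contra hh; exact h (hδs hh)
      simp [h1, h2] at hz
    have hm := hmin _ hsupp
    rw [hQexp t, hNexp t] at hm
    have hQφ : Qf G a W U φ = lam := hlam.symm
    nlinarith [hm]
  have hβ := quad_coeff_zero (Qf G a W U δ - lam) (2*X - lam * (2 * φ x)) hquad
  rw [hXval] at hβ
  linarith

/-- Q decreases when passing to absolute values. -/
lemma Qf_abs_le (hsym : ∀ x y, a x y = a y x) (hpos : ∀ x y, G.Adj x y → 0 < a x y)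
    (U : Finset V) (f : V → ℝ) (hf : support f ⊆ ↑U) :
    Qf G a W U (fun z => |f z|) ≤ Qf G a W U f := by
  have habs : support (fun z => |f z|) ⊆ ↑U := by
    intro z hz; apply hf; simp only [mem_support] at hz ⊢; exact fun h => hz (by simp [h])
  have hWeq : ∑ x ∈ U, W x * (|f x| * |f x|) = ∑ x ∈ U, W x * (f x * f x) :=
    Finset.sum_congr rfl fun x _ => by rw [abs_mul_abs_self]
  have hsplit : ∀ g : V → ℝ, Qf G a W U g
      = (∑ x ∈ U, W x * (g x * g x)) + ∑ x ∈ U, opA G a g x * g x := by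
    intro g; unfold Qf; rw [← Finset.sum_add_distrib]
    exact Finset.sum_congr rfl fun x _ => by ring
  have hg1 := green G a hsym U (fun z => |f z|) (fun z => |f z|) habs
  have hg2 := green G a hsym U f f hf
  have hDle : ∑ x ∈ TT G U, ∑ y ∈ TT G U,
        (if G.Adj x y then a x y * (|f x| - |f y|) * (|f x| - |f y|) else 0)
      ≤ ∑ x ∈ TT G U, ∑ y ∈ TT G U,
        (if G.Adj x y then a x y * (f x - f y) * (f x - f y) else 0) := by
    apply Finset.sum_le_sum; intro x _
    apply Finset.sum_le_sum; intro y _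
    by_cases h : G.Adj x y
    · simp only [h, if_true]
      have ha := (hpos x y h).le
      have h1 : |(|f x| - |f y|)| ≤ |f x - f y| := abs_abs_sub_abs_le_abs_sub _ _
      have h2 : (|f x| - |f y|) * (|f x| - |f y|) ≤ (f x - f y) * (f x - f y) := by
        have := mul_self_le_mul_self (abs_nonneg _) h1
        rwa [abs_mul_abs_self, abs_mul_abs_self] at this
      nlinarith
    · simp [h]
  rw [hsplit, hsplit]
  have : ∑ x ∈ U, opA G a (fun z => |f z|) x * |f x| ≤ ∑ x ∈ U, opA G a f x * f x := by
    linarith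
  linarith [hWeq.le, hWeq.ge]

/-- Existence of a nonnegative normalized minimizer with eigen-equation on `U`. -/
lemma finite_ground (hsym : ∀ x y, a x y = a y x) (hpos : ∀ x y, G.Adj x y → 0 < a x y)
    (U : Finset V) (hne : U.Nonempty) :
    ∃ (φ : V → ℝ) (lam : ℝ),
      support φ ⊆ ↑U ∧ (∀ x, 0 ≤ φ x) ∧ Nf U φ = 1 ∧
      (∀ x ∈ U, W x * φ x + opA G a φ x = lam * φ x) ∧
      lam = Qf G a W U φ ∧
      (∀ f : V → ℝ, support f ⊆ ↑U → lam * Nf U f ≤ Qf G a W U f) := by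
  classical
  -- work in the finite-dimensional space ↥U → ℝ
  set ext : (↥U → ℝ) → (V → ℝ) := fun g z => if h : z ∈ U then g ⟨z, h⟩ else 0 with hext
  have hextsupp : ∀ g, support (ext g) ⊆ ↑U := by
    intro g z hz
    by_contra h
    have hU : z ∉ U := fun hh => h (Finset.mem_coe.2 hh)
    simp [hext, hU] at hz
  have hextresp : ∀ f : V → ℝ, support f ⊆ ↑U → ext (fun i => f i.1) = f := by
    intro f hf; funext z
    by_cases h : z ∈ U
    · simp [hext, h]
    · have : f z = 0 := by
        by_contra hh; exact h (Finset.mem_coe.1 (hf hh))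
      simp [hext, h, this]
  have hcont : ∀ z, Continuous fun g : ↥U → ℝ => ext g z := by
    intro z
    by_cases h : z ∈ U
    · simp only [hext, dif_pos h]; exact continuous_apply _
    · simp only [hext, dif_neg h]; exact continuous_const
  have hcontA : ∀ z, Continuous fun g : ↥U → ℝ => opA G a (ext g) z := by
    intro z
    unfold opA
    apply continuous_finset_sum
    intro y _
    exact continuous_const.mul ((hcont z).sub (hcont y))
  have hcontQ : Continuous fun g : ↥U → ℝ => Qf G a W U (ext g) := by
    unfold Qf
    apply continuous_finset_sum
    intro x _
    exact ((continuous_const.mul (hcont x)).add (hcontA x)).mul (hcont x)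
  have hcontN : Continuous fun g : ↥U → ℝ => Nf U (ext g) := by
    unfold Nf
    apply continuous_finset_sum
    intro x _
    exact (hcont x).mul (hcont x)
  set K : Set (↥U → ℝ) := {g | Nf U (ext g) = 1} with hK
  have hKclosed : IsClosed K := isClosed_eq hcontN continuous_const
  have hKbdd : Bornology.IsBounded K := by
    rw [Metric.isBounded_iff_subset_closedBall 0]
    refine ⟨1, ?_⟩
    intro g hg
    rw [Metric.mem_closedBall, dist_zero_right]
    rw [pi_norm_le_iff_of_nonneg zero_le_one]
    intro i
    rw [Real.norm_eq_abs]
    have hterm : (ext g i.1) * (ext g i.1) ≤ 1 := by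
      have h1 : ∀ x ∈ U, (0:ℝ) ≤ ext g x * ext g x := fun x _ => mul_self_nonneg _
      have h2 := Finset.single_le_sum h1 i.2
      have := hg
      rw [hK, Set.mem_setOf_eq] at this
      unfold Nf at this
      linarith
    have hval : ext g i.1 = g i := by simp [hext, i.2]
    rw [hval] at hterm
    nlinarith [abs_nonneg (g i), sq_abs (g i), abs_mul_abs_self (g i)]
  have hKcompact : IsCompact K := Metric.isCompact_of_isClosed_isBounded hKclosed hKbdd
  have hKne : K.Nonempty := by
    obtain ⟨u0, hu0⟩ := hne
    refine ⟨fun i => if i.1 = u0 then 1 else 0, ?_⟩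
    rw [hK, Set.mem_setOf_eq]
    unfold Nf
    have hcalc : ∀ x ∈ U, ext (fun i => if i.1 = u0 then (1:ℝ) else 0) x
        * ext (fun i => if i.1 = u0 then (1:ℝ) else 0) x = if x = u0 then 1 else 0 := by
      intro x hx
      have : ext (fun i => if i.1 = u0 then (1:ℝ) else 0) x = if x = u0 then 1 else 0 := by
        simp [hext, hx]
      rw [this]
      by_cases h : x = u0 <;> simp [h]
    rw [Finset.sum_congr rfl hcalc, Finset.sum_ite_eq' U u0 (fun _ => (1:ℝ)), if_pos hu0]
  obtain ⟨g₀, hg₀K, hg₀min⟩ := hKcompact.exists_isMinOn hKne hcontQ.continuousOn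
  set φ₁ : V → ℝ := ext g₀ with hφ₁
  have hφ₁supp : support φ₁ ⊆ ↑U := hextsupp g₀
  have hφ₁N : Nf U φ₁ = 1 := hg₀K
  -- minimality transferred to functions on V
  have hminfun : ∀ f : V → ℝ, support f ⊆ ↑U → Nf U f = 1 →
      Qf G a W U φ₁ ≤ Qf G a W U f := by
    intro f hf hNf
    have h1 : (fun i : ↥U => f i.1) ∈ K := by
      rw [hK, Set.mem_setOf_eq, hextresp f hf]; exact hNf
    have := hg₀min h1
    simpa [hextresp f hf] using this
  -- take absolute value
  set φ : V → ℝ := fun z => |φ₁ z| with hφ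
  have hφsupp : support φ ⊆ ↑U := by
    intro z hz; apply hφ₁supp
    simp only [mem_support, hφ] at hz ⊢
    exact fun h => hz (by simp [h])
  have hφN : Nf U φ = 1 := by
    unfold Nf at hφ₁N ⊢
    rw [← hφ₁N]
    exact Finset.sum_congr rfl fun x _ => by rw [hφ, abs_mul_abs_self]
  have hφnonneg : ∀ x, 0 ≤ φ x := fun x => abs_nonneg _
  set lam : ℝ := Qf G a W U φ with hlam
  have hφmin1 : ∀ f : V → ℝ, support f ⊆ ↑U → Nf U f = 1 → lam ≤ Qf G a W U f := by
    intro f hf hNf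
    have h1 := Qf_abs_le G a W hsym hpos U φ₁ hφ₁supp
    have h2 := hminfun f hf hNf
    rw [hlam]
    calc Qf G a W U φ ≤ Qf G a W U φ₁ := h1
      _ ≤ Qf G a W U f := h2
  -- general minimality via scaling
  have hφmin : ∀ f : V → ℝ, support f ⊆ ↑U → lam * Nf U f ≤ Qf G a W U f := by
    intro f hf
    rcases eq_or_lt_of_le (Nf_nonneg U f) with h0 | h0
    · have hz := eq_zero_of_Nf_eq_zero (U := U) hf h0.symm
      rw [← h0, hz]
      unfold Qf
      simp [opA]
    · set s := Real.sqrt (Nf U f) with hs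
      have hspos : 0 < s := Real.sqrt_pos.2 h0
      have hs2 : s^2 = Nf U f := Real.sq_sqrt (le_of_lt h0)
      set g := fun z => s⁻¹ * f z with hg
      have hgs : support g ⊆ ↑U := by
        intro z hz; apply hf
        simp only [mem_support, hg] at hz ⊢
        intro h; exact hz (by rw [h, mul_zero])
      have hgN : Nf U g = 1 := by
        rw [hg, Nf_smul]
        field_simp [hs2]
        exact hs2.symm
      have := hφmin1 g hgs hgN
      rw [hg, Qf_smul] at this
      have hinv : (s⁻¹)^2 = (Nf U f)⁻¹ := by
        rw [← hs2]; field_simp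
      rw [hinv] at this
      have hNfne : Nf U f ≠ 0 := ne_of_gt h0
      calc lam * Nf U f ≤ ((Nf U f)⁻¹ * Qf G a W U f) * Nf U f := by
            apply mul_le_mul_of_nonneg_right this (le_of_lt h0)
        _ = Qf G a W U f := by field_simp
  refine ⟨φ, lam, hφsupp, hφnonneg, hφN, ?_, hlam, hφmin⟩
  intro x hx
  exact rayleigh_EL G a W hsym U φ lam hφsupp hφN hlam hφmin hx

/-- exhaustion by combinatorial balls -/
noncomputable def ballK (o : V) : ℕ → Finset V
  | 0 => {o}
  | n+1 => ballK o n ∪ (ballK o n).biUnion (fun x => G.neighborFinset x)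

lemma ballK_succ (o : V) (n : ℕ) :
    ballK G o (n+1) = ballK G o n ∪ (ballK G o n).biUnion (fun x => G.neighborFinset x) := rfl

lemma ballK_subset_succ (o : V) (n : ℕ) : ballK G o n ⊆ ballK G o (n+1) := by
  rw [ballK_succ]; exact Finset.subset_union_left

lemma ballK_mono (o : V) {n m : ℕ} (h : n ≤ m) : ballK G o n ⊆ ballK G o m := by
  induction m with
  | zero => rw [Nat.le_zero.1 h]
  | succ k ih =>
    rcases Nat.lt_or_ge n (k+1) with h1 | h2
    · exact (ih (Nat.lt_succ_iff.1 h1)).trans (ballK_subset_succ G o k)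
    · rw [Nat.le_antisymm h h2]
lemma o_mem_ballK (o : V) (n : ℕ) : o ∈ ballK G o n :=
  ballK_mono G o (Nat.zero_le n) (by simp [ballK])

lemma mem_ballK_succ (o : V) {n : ℕ} {x : V} (hx : x ∈ ballK G o (n+1)) :
    x ∈ ballK G o n ∨ ∃ u ∈ ballK G o n, G.Adj u x := by
  rw [ballK_succ] at hx
  rcases Finset.mem_union.1 hx with h | h
  · exact Or.inl h
  · obtain ⟨u, hu, hux⟩ := Finset.mem_biUnion.1 h
    exact Or.inr ⟨u, hu, (SimpleGraph.mem_neighborFinset G u x).1 hux⟩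

lemma adj_mem_ballK (o : V) {n : ℕ} {x y : V} (hx : x ∈ ballK G o n) (hxy : G.Adj x y) :
    y ∈ ballK G o (n+1) := by
  rw [ballK_succ]
  exact Finset.mem_union_right _
    (Finset.mem_biUnion.2 ⟨x, hx, (SimpleGraph.mem_neighborFinset G x y).2 hxy⟩)

lemma walk_mem_ballK (o : V) : ∀ {u x : V} (w : G.Walk u x) {n : ℕ},
    u ∈ ballK G o n → x ∈ ballK G o (n + w.length) := by
  intro u x w
  induction w with
  | nil => intro n h; simpa using h
  | cons hadj p ih =>
    intro n h
    have h1 := adj_mem_ballK G o h hadj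
    have := ih h1
    have harith : n + 1 + p.length = n + (p.length + 1) := by omega
    rw [harith] at this
    simpa [SimpleGraph.Walk.length_cons] using this

lemma exists_mem_ballK (hG : G.Connected) (o x : V) : ∃ n, x ∈ ballK G o n := by
  obtain ⟨w⟩ := hG o x
  exact ⟨w.length, by simpa using walk_mem_ballK G o w (o_mem_ballK G o 0)⟩

lemma finset_subset_ballK (hG : G.Connected) (o : V) (F : Finset V) :
    ∃ n, F ⊆ ballK G o n := by
  classical
  induction F using Finset.induction_on with
  | empty => exact ⟨0, Finset.empty_subset _⟩
  | @insert z F' hnotmem ih =>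
    obtain ⟨n, hn⟩ := ih
    obtain ⟨m, hm⟩ := exists_mem_ballK G hG o z
    refine ⟨max n m, ?_⟩
    intro y hy
    rcases Finset.mem_insert.1 hy with h | h
    · exact ballK_mono G o (le_max_right n m) (h ▸ hm)
    · exact ballK_mono G o (le_max_left n m) (hn h)

/-- zero propagation along edges -/
lemma prop_zero (hpos : ∀ x y, G.Adj x y → 0 < a x y) {ψ : V → ℝ} {lam : ℝ} {x : V}
    (hnn : ∀ z, 0 ≤ ψ z) (heq : W x * ψ x + opA G a ψ x = lam * ψ x) (hx0 : ψ x = 0) :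
    ∀ y, G.Adj x y → ψ y = 0 := by
  intro y hxy
  have hsum : ∑ z ∈ G.neighborFinset x, a x z * ψ z = 0 := by
    have h1 : opA G a ψ x = - ∑ z ∈ G.neighborFinset x, a x z * ψ z := by
      unfold opA
      rw [← Finset.sum_neg_distrib]
      exact Finset.sum_congr rfl fun z _ => by rw [hx0]; ring
    rw [hx0] at heq
    rw [h1] at heq
    linarith
  have hterm := (Finset.sum_eq_zero_iff_of_nonneg ?_).1 hsum y
    ((SimpleGraph.mem_neighborFinset G x y).2 hxy)
  · have ha := hpos x y hxy
    rcases mul_eq_zero.1 hterm with h | h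
    · exact absurd h (ne_of_gt ha)
    · exact h
  · intro z hz
    exact mul_nonneg (hpos x z ((SimpleGraph.mem_neighborFinset G x z).1 hz)).le (hnn z)

/-- Harnack-type inequality along an edge -/
lemma harnack (hpos : ∀ x y, G.Adj x y → 0 < a x y) (c : ℝ) {ψ : V → ℝ} {lam : ℝ} {x y : V}
    (hnn : ∀ z, 0 ≤ ψ z) (heq : W x * ψ x + opA G a ψ x = lam * ψ x) (hlam : c ≤ lam)
    (hxy : G.Adj x y) :
    a x y * ψ y ≤ (W x + (∑ z ∈ G.neighborFinset x, a x z) - c) * ψ x := by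
  have hS : ∑ z ∈ G.neighborFinset x, a x z * ψ z
      = (W x + (∑ z ∈ G.neighborFinset x, a x z) - lam) * ψ x := by
    have h1 : opA G a ψ x
        = (∑ z ∈ G.neighborFinset x, a x z) * ψ x
          - ∑ z ∈ G.neighborFinset x, a x z * ψ z := by
      unfold opA
      rw [Finset.sum_mul, ← Finset.sum_sub_distrib]
      exact Finset.sum_congr rfl fun z _ => by ring
    rw [h1] at heq
    linarith [heq]
  have h2 : a x y * ψ y ≤ ∑ z ∈ G.neighborFinset x, a x z * ψ z := by
    apply Finset.single_le_sum (f := fun z => a x z * ψ z)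
    · intro z hz
      exact mul_nonneg (hpos x z ((SimpleGraph.mem_neighborFinset G x z).1 hz)).le (hnn z)
    · exact (SimpleGraph.mem_neighborFinset G x y).2 hxy
  have h3 : (W x + (∑ z ∈ G.neighborFinset x, a x z) - lam) * ψ x
      ≤ (W x + (∑ z ∈ G.neighborFinset x, a x z) - c) * ψ x := by
    apply mul_le_mul_of_nonneg_right _ (hnn x)
    linarith
  linarith

/-- ground states at finite levels, admissible tuples -/
def Good (c : ℝ) (o : V) (ψ : V → ℝ) (lam : ℝ) (m : ℕ) : Prop :=
  (∀ z, 0 ≤ ψ z) ∧ ψ o = 1 ∧ c ≤ lam ∧ support ψ ⊆ ↑(ballK G o m) ∧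
    ∀ z ∈ ballK G o m, W z * ψ z + opA G a ψ z = lam * ψ z

/-- uniform bound at each vertex for all admissible tuples -/
lemma good_bound (hpos : ∀ x y, G.Adj x y → 0 < a x y) (c : ℝ) (hW : ∀ x, c ≤ W x) (o : V) :
    ∀ x : V, (∃ n, x ∈ ballK G o n) →
      ∃ M : ℝ, 0 ≤ M ∧ ∀ ψ lam m, Good G a W c o ψ lam m → ψ x ≤ M := by
  classical
  -- strong induction on the minimal level
  suffices H : ∀ n : ℕ, ∀ x : V, (x ∈ ballK G o n ∧ ∀ m < n, x ∉ ballK G o m) →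
      ∃ M : ℝ, 0 ≤ M ∧ ∀ ψ lam m, Good G a W c o ψ lam m → ψ x ≤ M by
    intro x hx
    have hex : ∃ n, x ∈ ballK G o n := hx
    set n := Nat.find hex with hn
    exact H n x ⟨Nat.find_spec hex, fun m hm => Nat.find_min hex hm⟩
  intro n
  induction n using Nat.strong_induction_on with
  | _ n ih =>
    intro x ⟨hxn, hxmin⟩
    match n with
    | 0 =>
      have hxo : x = o := by simpa [ballK] using hxn
      refine ⟨1, zero_le_one, ?_⟩
      intro ψ lam m hg
      rw [hxo, hg.2.1]
    | Nat.succ n' =>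
      have hxn' : x ∉ ballK G o n' := hxmin n' (Nat.lt_succ_self n')
      obtain ⟨u, hu, hadj⟩ : ∃ u ∈ ballK G o n', G.Adj u x := by
        rcases mem_ballK_succ G o hxn with h | h
        · exact absurd h hxn'
        · exact h
      have hexu : ∃ j, u ∈ ballK G o j := ⟨n', hu⟩
      set k := Nat.find hexu with hk
      have hkle : k ≤ n' := Nat.find_min' hexu hu
      obtain ⟨Mu, hMu0, hMu⟩ := ih k (by omega) u
        ⟨Nat.find_spec hexu, fun m hm => Nat.find_min hexu hm⟩
      set C := (W u + (∑ z ∈ G.neighborFinset u, a u z) - c) / (a u x) with hC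
      have hC0 : 0 ≤ C := by
        apply div_nonneg _ (hpos u x hadj).le
        have h1 : (0:ℝ) ≤ ∑ z ∈ G.neighborFinset u, a u z :=
          Finset.sum_nonneg fun z hz =>
            (hpos u z ((SimpleGraph.mem_neighborFinset G u z).1 hz)).le
        linarith [hW u]
      refine ⟨max 0 (C * Mu), le_max_left _ _, ?_⟩
      intro ψ lam m hg
      obtain ⟨hnn, hψo, hlam, hsupp, heqs⟩ := hg
      rcases Nat.lt_or_ge m (n'+1) with hm | hm
      · -- x not in the support
        have hxm : x ∉ ballK G o m := fun h =>
          hxmin m hm (ballK_mono G o (by omega) h)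
        have : ψ x = 0 := by
          by_contra h
          exact hxm (Finset.mem_coe.1 (hsupp h))
        rw [this]; exact le_max_left _ _
      · -- Harnack step at u
        have hum : u ∈ ballK G o m := ballK_mono G o (by omega) hu
        have hequ := heqs u hum
        have h1 := harnack G a W hpos c hnn hequ hlam hadj
        have h2 : ψ u ≤ Mu := hMu ψ lam m ⟨hnn, hψo, hlam, hsupp, heqs⟩
        have hau : 0 < a u x := hpos u x hadj
        have h3 : a u x * ψ x ≤ (a u x * C) * Mu := by
          have hcoef : (W u + (∑ z ∈ G.neighborFinset u, a u z) - c) = a u x * C := by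
            rw [hC]; field_simp
          rw [hcoef] at h1
          calc a u x * ψ x ≤ (a u x * C) * ψ u := h1
            _ ≤ (a u x * C) * Mu := by
                apply mul_le_mul_of_nonneg_left h2
                positivity
        have : ψ x ≤ C * Mu := by
          have := (mul_le_mul_iff_right₀ hau).1 (by linarith : a u x * ψ x ≤ a u x * (C * Mu))
          linarith
        exact this.trans (le_max_right _ _)

/-- positivity at the base point for nonzero finite ground states -/
lemma pos_at_o (hpos : ∀ x y, G.Adj x y → 0 < a x y) (o : V) {n : ℕ} {ψ : V → ℝ} {lam : ℝ}
    (hnn : ∀ z, 0 ≤ ψ z) (hsupp : support ψ ⊆ ↑(ballK G o n))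
    (heqs : ∀ z ∈ ballK G o n, W z * ψ z + opA G a ψ z = lam * ψ z)
    (hne : ψ ≠ 0) : 0 < ψ o := by
  rcases (hnn o).lt_or_eq with h | h
  · exact h
  · exfalso
    have hzero : ∀ j, j ≤ n → ∀ x ∈ ballK G o j, ψ x = 0 := by
      intro j
      induction j with
      | zero =>
        intro _ x hx
        have : x = o := by simpa [ballK] using hx
        rw [this, ← h]
      | succ j' ihj =>
        intro hj x hx
        rcases mem_ballK_succ G o hx with h1 | h1
        · exact ihj (by omega) x h1
        · obtain ⟨u, hu, hadj⟩ := h1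
          have hu0 : ψ u = 0 := ihj (by omega) u hu
          have hun : u ∈ ballK G o n := ballK_mono G o (by omega) hu
          exact prop_zero G a W hpos hnn (heqs u hun) hu0 x hadj
    obtain ⟨z, hz⟩ : ∃ z, ψ z ≠ 0 := by
      by_contra hcon
      push_neg at hcon
      exact hne (funext fun z => hcon z)
    exact hz (hzero n le_rfl z (Finset.mem_coe.1 (hsupp hz)))

/-- positivity everywhere for global nonnegative solutions normalized at `o` -/
lemma pos_everywhere (hG : G.Connected) (hpos : ∀ x y, G.Adj x y → 0 < a x y) (o : V)
    {ψ : V → ℝ} {lam : ℝ} (hnn : ∀ z, 0 ≤ ψ z) (hψo : ψ o = 1)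
    (heqs : ∀ z, W z * ψ z + opA G a ψ z = lam * ψ z) : ∀ x, 0 < ψ x := by
  have key : ∀ j, ∀ x ∈ ballK G o j, ψ x = 0 → ψ o = 0 := by
    intro j
    induction j with
    | zero =>
      intro x hx h0
      have : x = o := by simpa [ballK] using hx
      rw [← this]; exact h0
    | succ j' ihj =>
      intro x hx h0
      rcases mem_ballK_succ G o hx with h1 | h1
      · exact ihj x h1 h0
      · obtain ⟨u, hu, hadj⟩ := h1
        have hu0 : ψ u = 0 := prop_zero G a W hpos hnn (heqs x) h0 u hadj.symm
        exact ihj u hu hu0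
  intro x
  rcases (hnn x).lt_or_eq with h | h
  · exact h
  · exfalso
    obtain ⟨n, hn⟩ := exists_mem_ballK G hG o x
    have := key n x hn h.symm
    rw [hψo] at this
    exact one_ne_zero this

lemma Qf_subset {U U' : Finset V} (hUU' : U ⊆ U') {f : V → ℝ} (hf : support f ⊆ ↑U) :
    Qf G a W U' f = Qf G a W U f := by
  refine (Finset.sum_subset hUU' ?_).symm
  intro x _ hx
  have : f x = 0 := by
    by_contra h; exact hx (Finset.mem_coe.1 (hf h))
  rw [this, mul_zero]

lemma Nf_subset {U U' : Finset V} (hUU' : U ⊆ U') {f : V → ℝ} (hf : support f ⊆ ↑U) :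
    Nf U' f = Nf U f := by
  refine (Finset.sum_subset hUU' ?_).symm
  intro x _ hx
  have : f x = 0 := by
    by_contra h; exact hx (Finset.mem_coe.1 (hf h))
  rw [this, mul_zero]

lemma finsum_Qf {U : Finset V} {f : V → ℝ} (hf : support f ⊆ ↑U) :
    ∑ᶠ x, (W x * f x + opA G a f x) * f x = Qf G a W U f := by
  apply finsum_eq_sum_of_support_subset
  intro x hx
  apply hf
  simp only [mem_support] at hx ⊢
  intro h; exact hx (by rw [h, mul_zero])

lemma finsum_Nf {U : Finset V} {f : V → ℝ} (hf : support f ⊆ ↑U) :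
    ∑ᶠ x, f x * f x = Nf U f := by
  apply finsum_eq_sum_of_support_subset
  intro x hx
  apply hf
  simp only [mem_support] at hx ⊢
  intro h; exact hx (by rw [h, mul_zero])

end Aux

/-- Existence of a ground state: a strictly positive pointwise solution of L φ = λ₀ φ,
where λ₀ is the bottom of the spectrum (infimum of the Rayleigh quotient over
nonzero finitely supported functions). -/
theorem exists_ground_state {V : Type*} [Countable V] (G : SimpleGraph V) [G.LocallyFinite]
    (hG : G.Connected)
    (a : V → V → ℝ) (hsym : ∀ x y, a x y = a y x) (hpos : ∀ x y, G.Adj x y → 0 < a x y)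
    (W : V → ℝ) (c : ℝ) (hW : ∀ x, c ≤ W x) (lam0 : ℝ)
    (hlam0 : lam0 = sInf {r : ℝ | ∃ f : V → ℝ, (Function.support f).Finite ∧ f ≠ 0 ∧
        r = (∑ᶠ x, (W x * f x + opA G a f x) * f x) / (∑ᶠ x, f x * f x)}) :
    ∃ φ : V → ℝ, (∀ x, 0 < φ x) ∧ ∀ x, W x * φ x + opA G a φ x = lam0 * φ x := by
  classical
  set S : Set ℝ := {r : ℝ | ∃ f : V → ℝ, (Function.support f).Finite ∧ f ≠ 0 ∧
      r = (∑ᶠ x, (W x * f x + opA G a f x) * f x) / (∑ᶠ x, f x * f x)} with hS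
  have hV : Nonempty V := hG.nonempty
  set o : V := Classical.arbitrary V with ho
  -- properties of nonzero finitely supported functions
  have hNpos : ∀ (f : V → ℝ) (U : Finset V), support f ⊆ ↑U → f ≠ 0 → 0 < Nf U f := by
    intro f U hsupp hne
    rcases (Nf_nonneg U f).lt_or_eq with h | h
    · exact h
    · exact absurd (eq_zero_of_Nf_eq_zero hsupp h.symm) hne
  -- lower bound for S
  have hSlb : ∀ r ∈ S, c ≤ r := by
    intro r hr
    obtain ⟨f, hfin, hne, hr⟩ := hr
    set U := hfin.toFinset with hU
    have hsupp : support f ⊆ ↑U := by rw [hU]; simp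
    have hNf := hNpos f U hsupp hne
    rw [hr, finsum_Qf G a W hsupp, finsum_Nf hsupp, le_div_iff₀ hNf]
    exact Qf_ge_c G a W hsym hpos c hW U f hsupp
  have hSbdd : BddBelow S := ⟨c, hSlb⟩
  have hSne : S.Nonempty := by
    refine ⟨_, fun z => if z = o then 1 else 0, ?_, ?_, rfl⟩
    · apply Set.Finite.subset (Set.finite_singleton o)
      intro z hz
      simp only [mem_support] at hz
      by_contra h
      simp only [Set.mem_singleton_iff] at h
      simp [h] at hz
    · intro h
      have := congrFun h o
      simp at this
  -- finite ground states on the exhaustion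
  have hFG := fun n => finite_ground G a W hsym hpos (ballK G o n) ⟨o, o_mem_ballK G o n⟩
  choose φn lamn hsupp hnn hNf heqn hQ hminn using hFG
  have hφne : ∀ n, φn n ≠ 0 := by
    intro n h
    have := hNf n
    rw [h] at this
    unfold Nf at this
    simp at this
  -- each lamn is in S and c ≤ lamn
  have hlamc : ∀ n, c ≤ lamn n := by
    intro n
    have h1 := Qf_ge_c G a W hsym hpos c hW _ _ (hsupp n)
    rw [hNf n, mul_one, ← hQ n] at h1
    exact h1
  have hlammem : ∀ n, lamn n ∈ S := by
    intro n
    refine ⟨φn n, ?_, hφne n, ?_⟩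
    · exact Set.Finite.subset (ballK G o n).finite_toSet (hsupp n)
    · rw [finsum_Qf G a W (hsupp n), finsum_Nf (hsupp n), hNf n, ← hQ n, div_one]
  have hlam0le : ∀ n, lam0 ≤ lamn n := by
    intro n; rw [hlam0]; exact csInf_le hSbdd (hlammem n)
  -- antitone
  have hanti : Antitone lamn := by
    intro n m hnm
    have hUsub : ballK G o n ⊆ ballK G o m := ballK_mono G o hnm
    have hsupp' : support (φn n) ⊆ ↑(ballK G o m) :=
      (hsupp n).trans (Finset.coe_subset.2 hUsub)
    have h1 := hminn m (φn n) hsupp'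
    rw [Nf_subset hUsub (hsupp n), Qf_subset G a W hUsub (hsupp n), hNf n, mul_one, ← hQ n] at h1
    exact h1
  -- convergence of lamn to lam0
  have hbddrange : BddBelow (Set.range lamn) := by
    refine ⟨lam0, ?_⟩
    rintro r ⟨n, rfl⟩
    exact hlam0le n
  have hinf : ⨅ n, lamn n = lam0 := by
    apply le_antisymm
    · rw [hlam0]
      apply le_csInf hSne
      intro r hr
      obtain ⟨f, hfin, hne, hr⟩ := hr
      obtain ⟨n, hn⟩ := finset_subset_ballK G hG o hfin.toFinset
      have hsupp' : support f ⊆ ↑(ballK G o n) := by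
        intro z hz
        exact Finset.mem_coe.2 (hn (by simpa using hz))
      have h1 := hminn n f hsupp'
      have hNfpos := hNpos f _ hsupp' hne
      have h2 : lamn n ≤ r := by
        rw [hr, finsum_Qf G a W hsupp', finsum_Nf hsupp', le_div_iff₀ hNfpos]
        exact h1
      exact (ciInf_le hbddrange n).trans h2
    · exact le_ciInf hlam0le
  have hconv : Filter.Tendsto lamn Filter.atTop (nhds lam0) := by
    rw [← hinf]
    exact tendsto_atTop_ciInf hanti hbddrange
  -- normalize
  have hφo : ∀ n, 0 < φn n o :=
    fun n => pos_at_o G a W hpos o (hnn n) (hsupp n) (heqn n) (hφne n)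
  set ψ : ℕ → V → ℝ := fun n z => (φn n o)⁻¹ * φn n z with hψ
  have hψnn : ∀ n z, 0 ≤ ψ n z :=
    fun n z => mul_nonneg (inv_nonneg.2 (hφo n).le) (hnn n z)
  have hψo : ∀ n, ψ n o = 1 := fun n => inv_mul_cancel₀ (hφo n).ne'
  have hψsupp : ∀ n, support (ψ n) ⊆ ↑(ballK G o n) := by
    intro n z hz
    apply hsupp n
    simp only [mem_support, hψ] at hz ⊢
    intro h; exact hz (by rw [h, mul_zero])
  have hψeq : ∀ n, ∀ z ∈ ballK G o n,
      W z * ψ n z + opA G a (ψ n) z = lamn n * ψ n z := by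
    intro n z hz
    have h1 := heqn n z hz
    have h2 : opA G a (ψ n) z = (φn n o)⁻¹ * opA G a (φn n) z := opA_smul G a _ _ z
    simp only [hψ]
    rw [h2]
    calc W z * ((φn n o)⁻¹ * φn n z) + (φn n o)⁻¹ * opA G a (φn n) z
        = (φn n o)⁻¹ * (W z * φn n z + opA G a (φn n) z) := by ring
      _ = (φn n o)⁻¹ * (lamn n * φn n z) := by rw [h1]
      _ = lamn n * ((φn n o)⁻¹ * φn n z) := by ring
  have hGood : ∀ n, Good G a W c o (ψ n) (lamn n) n :=
    fun n => ⟨hψnn n, hψo n, hlamc n, hψsupp n, hψeq n⟩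
  -- uniform bounds
  have hbd := fun x => good_bound G a W hpos c hW o x (exists_mem_ballK G hG o x)
  choose M hM0 hM using hbd
  -- ultrafilter limit
  set F : Ultrafilter ℕ := Ultrafilter.of Filter.atTop with hF
  have hFle : ↑F ≤ (Filter.atTop : Filter ℕ) := Ultrafilter.of_le _
  have hlim : ∀ x : V, ∃ ℓ ∈ Set.Icc (0:ℝ) (M x),
      Filter.Tendsto (fun n => ψ n x) ↑F (nhds ℓ) := by
    intro x
    have hmem : ∀ n, ψ n x ∈ Set.Icc (0:ℝ) (M x) := by
      intro n
      exact ⟨hψnn n x, hM x (ψ n) (lamn n) n (hGood n)⟩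
    have hle : ↑(F.map fun n => ψ n x) ≤ Filter.principal (Set.Icc (0:ℝ) (M x)) := by
      rw [Ultrafilter.coe_map, Filter.le_principal_iff, Filter.mem_map]
      exact Filter.univ_mem' hmem
    obtain ⟨ℓ, hℓ, hℓle⟩ := (isCompact_Icc).ultrafilter_le_nhds (F.map fun n => ψ n x) hle
    refine ⟨ℓ, hℓ, ?_⟩
    rwa [Filter.Tendsto, ← Ultrafilter.coe_map]
  choose φ hφmem hφconv using hlim
  -- properties of the limit
  have hφnn : ∀ x, 0 ≤ φ x := fun x => (hφmem x).1
  have hφolim : φ o = 1 := by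
    have h1 : Filter.Tendsto (fun n => ψ n o) ↑F (nhds 1) := by
      have : (fun n => ψ n o) = fun _ => (1:ℝ) := funext hψo
      rw [this]; exact tendsto_const_nhds
    exact tendsto_nhds_unique (hφconv o) h1
  have hlamF : Filter.Tendsto lamn ↑F (nhds lam0) := hconv.mono_left hFle
  have hφeq : ∀ x, W x * φ x + opA G a φ x = lam0 * φ x := by
    intro x
    obtain ⟨n₀, hn₀⟩ := exists_mem_ballK G hG o x
    have heve : ∀ᶠ n in ↑F, W x * ψ n x + opA G a (ψ n) x = lamn n * ψ n x := by
      apply Filter.Eventually.filter_mono hFle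
      apply Filter.eventually_atTop.2
      exact ⟨n₀, fun n hn => hψeq n x (ballK_mono G o hn hn₀)⟩
    have hL : Filter.Tendsto (fun n => W x * ψ n x + opA G a (ψ n) x) ↑F
        (nhds (W x * φ x + opA G a φ x)) := by
      apply Filter.Tendsto.add
      · exact (hφconv x).const_mul _
      · unfold opA
        apply tendsto_finset_sum
        intro y _
        exact (((hφconv x).sub (hφconv y)).const_mul _)
    have hR : Filter.Tendsto (fun n => lamn n * ψ n x) ↑F (nhds (lam0 * φ x)) :=
      hlamF.mul (hφconv x)
    exact tendsto_nhds_unique (hL.congr' heve) hR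
  refine ⟨φ, ?_, hφeq⟩
  exact pos_everywhere G a W hG hpos o hφnn hφolim hφeq
end

section
/- (Uniqueness of bounded solutions of the heat equation) Assume sup_x m(x)=M<∞ and sup a_{x,y}=a<∞. If u(x,t) is a bounded solution of Au + ∂u/∂t = 0 on V × [0,∞) with u(x,0) = u₀(x) and |u₀(x)| ≤ N₀ for all x, then |u(x,t)| ≤ N₀ for all (x,t). In particular bounded solutions of the initial value problem are unique. -/
open scoped BigOperators Classical

lemma ball_finite {V : Type*} (G : SimpleGraph V) [G.LocallyFinite] (hG : G.Connected)
    (x : V) : ∀ R : ℕ, {y | G.dist x y ≤ R}.Finite := by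
  intro R
  induction R with
  | zero =>
    refine Set.Finite.subset (Set.finite_singleton x) fun y hy => ?_
    simp only [Set.mem_setOf_eq, Nat.le_zero] at hy
    have := ((hG.dist_eq_zero_iff (u := x) (v := y))).mp hy
    simp [this]
  | succ R ih =>
    refine Set.Finite.subset (ih.union (Set.Finite.biUnion ih
      (fun z _ => (G.neighborFinset z).finite_toSet))) fun y hy => ?_
    simp only [Set.mem_setOf_eq] at hy
    by_cases h : G.dist x y ≤ R
    · exact Or.inl h
    · right
      have hne : x ≠ y := by
        rintro rfl
        simp [SimpleGraph.dist_self] at h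
      obtain ⟨p, hp⟩ := (hG x y).exists_walk_length_eq_dist
      obtain ⟨z, hadj, q, hq⟩ := SimpleGraph.Walk.exists_eq_cons_of_ne hne.symm p.reverse
      have hql : q.length ≤ R := by
        have : p.reverse.length = G.dist x y := by simpa using hp
        have h1 : q.length + 1 = G.dist x y := by
          rw [← this, hq]; simp [SimpleGraph.Walk.length_cons, Nat.add_comm]
        omega
      have hz : G.dist x z ≤ R := le_trans (SimpleGraph.dist_le q.reverse) (by simpa using hql)
      exact Set.mem_biUnion hz (by simp [hadj.symm])

set_option maxHeartbeats 1000000 in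
lemma heat_le {V : Type*} (G : SimpleGraph V) [G.LocallyFinite] (hG : G.Connected)
    (a : V → V → ℝ) (hpos : ∀ x y, G.Adj x y → 0 < a x y)
    (M : ℕ) (hdeg : ∀ x, G.degree x ≤ M) (aa : ℝ) (hub : ∀ x y, G.Adj x y → a x y ≤ aa)
    (u : V → ℝ → ℝ) (N₀ N₁ : ℝ)
    (hbdd : ∀ x t, 0 ≤ t → |u x t| ≤ N₁)
    (hheat : ∀ x t, 0 ≤ t →
      HasDerivWithinAt (u x) (-(opA G a (fun y => u y t) x)) (Set.Ici (0 : ℝ)) t)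
    (hinit : ∀ x, u x 0 ≤ N₀) :
    ∀ x t, 0 ≤ t → u x t ≤ N₀ := by
  intro x t ht
  set b : ℝ := max aa 0 with hbdef
  have hb : 0 ≤ b := le_max_right _ _
  set c : ℝ := b * M + 1 with hcdef
  have hc : 0 < c := by positivity
  have key : ∀ ε : ℝ, 0 < ε → u x t ≤ N₀ + ε * (c * t + 1) := by
    intro ε hε
    obtain ⟨R, hR⟩ := exists_nat_gt ((N₁ + |N₀|) / ε)
    have hεR : N₁ + |N₀| < R * ε := (div_lt_iff₀ hε).mp hR
    -- the comparison function
    set r : V → ℝ := fun y => (G.dist x y : ℝ) with hrdef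
    set w : V → ℝ → ℝ := fun y s => u y s - N₀ - ε * (r y + c * s + 1) with hwdef
    have hrx : r x = 0 := by simp [hrdef, SimpleGraph.dist_self]
    -- the finite ball
    set B : Finset V := (ball_finite G hG x R).toFinset with hBdef
    have hmemB : ∀ y, y ∈ B ↔ G.dist x y ≤ R := by
      intro y; simp [hBdef, Set.Finite.mem_toFinset]
    have hxB : x ∈ B := (hmemB x).mpr (by simp [SimpleGraph.dist_self])
    have hBne : B.Nonempty := ⟨x, hxB⟩
    -- continuity of w
    have hcontw : ∀ y : V, ContinuousOn (w y) (Set.Icc 0 t) := by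
      intro y
      have h1 : ContinuousOn (u y) (Set.Icc 0 t) :=
        fun s hs => ((hheat y s hs.1).continuousWithinAt).mono
          (fun z hz => hz.1 : Set.Icc (0:ℝ) t ⊆ Set.Ici 0)
      have h2 : ContinuousOn (fun s : ℝ => N₀ + ε * (r y + c * s + 1)) (Set.Icc 0 t) := by
        fun_prop
      have := h1.sub h2
      simpa [hwdef, sub_sub, Pi.sub_def] using this
    -- the max over the ball
    set g : ℝ → ℝ := fun s => B.sup' hBne (fun y => w y s) with hgdef
    have hcontg : ContinuousOn g (Set.Icc 0 t) :=
      ContinuousOn.finset_sup'_apply hBne fun y _ => hcontw y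
    obtain ⟨t', ht'mem, ht'max⟩ :=
      isCompact_Icc.exists_isMaxOn ⟨0, Set.left_mem_Icc.mpr ht⟩ hcontg
    obtain ⟨x', hx'B, hx'⟩ := Finset.exists_mem_eq_sup' hBne (fun y => w y t')
    set m : ℝ := w x' t' with hmdef
    have hgt' : g t' = m := hx'
    have hwxt : w x t ≤ m := by
      have h1 : w x t ≤ g t := Finset.le_sup' (fun y => w y t) hxB
      have h2 : g t ≤ g t' := ht'max (Set.right_mem_Icc.mpr ht)
      rw [hgt'] at h2; linarith
    have hm : m < 0 := by
      by_contra hm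
      push_neg at hm
      rcases eq_or_lt_of_le ht'mem.1 with h0 | ht'pos
      · -- t' = 0
        have hinit' := hinit x'
        have hr0 : 0 ≤ r x' := Nat.cast_nonneg _
        have hm0 : m = u x' 0 - N₀ - ε * (r x' + c * 0 + 1) := by
          rw [hmdef, ← h0]
        nlinarith [hm0, hinit', hr0, hε, hc]
      · -- t' > 0 : every vertex satisfies w y t' ≤ m
        have hwy : ∀ y : V, w y t' ≤ m := by
          intro y
          by_cases hyB : y ∈ B
          · have := Finset.le_sup' (fun z => w z t') hyB
            rw [hx'] at this; exact this
          · have hdy : (R : ℝ) + 1 ≤ r y := by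
              have : ¬ G.dist x y ≤ R := fun h => hyB ((hmemB y).mpr h)
              have h2 : R + 1 ≤ G.dist x y := by omega
              simp only [hrdef]
              exact_mod_cast h2
            have hu := (abs_le.mp (hbdd y t' ht'mem.1)).2
            have hN : -N₀ ≤ |N₀| := neg_le_abs N₀
            have hct : 0 ≤ c * t' := mul_nonneg hc.le ht'mem.1
            have : w y t' ≤ N₁ + |N₀| - ε * ((R:ℝ) + 1) - c * t' * ε := by
              simp only [hwdef]
              nlinarith
            nlinarith
        -- the operator term is nonnegative at the max
        have hAw : 0 ≤ ∑ y ∈ G.neighborFinset x', a x' y * (w x' t' - w y t') := by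
          refine Finset.sum_nonneg fun y hy => ?_
          have hadj := (SimpleGraph.mem_neighborFinset G x' y).mp hy
          exact mul_nonneg (hpos _ _ hadj).le (by have := hwy y; rw [← hmdef]; linarith)
        -- the distance term
        have hS : -(b * M) ≤ ∑ y ∈ G.neighborFinset x', a x' y * (r x' - r y) := by
          have hpt : ∀ y ∈ G.neighborFinset x', -b ≤ a x' y * (r x' - r y) := by
            intro y hy
            have hadj := (SimpleGraph.mem_neighborFinset G x' y).mp hy
            have ha := hpos _ _ hadj
            have hab : a x' y ≤ b := le_trans (hub _ _ hadj) (le_max_left _ _)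
            have hd1 : G.dist x y ≤ G.dist x x' + 1 := by
              have := hG.dist_triangle (u := x) (v := x') (w := y)
              have hone : G.dist x' y = 1 := SimpleGraph.dist_eq_one_iff_adj.mpr hadj
              omega
            have hrr : -1 ≤ r x' - r y := by
              have : (G.dist x y : ℝ) ≤ (G.dist x x' : ℝ) + 1 := by exact_mod_cast hd1
              simp only [hrdef]; linarith
            nlinarith
          calc -(b * M) ≤ ((G.neighborFinset x').card : ℝ) * (-b) := by
                have hcard : ((G.neighborFinset x').card : ℝ) ≤ M := by
                  exact_mod_cast (G.card_neighborFinset_eq_degree x') ▸ hdeg x'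
                have hcard0 : (0:ℝ) ≤ ((G.neighborFinset x').card : ℝ) := Nat.cast_nonneg _
                nlinarith
            _ = ∑ _y ∈ G.neighborFinset x', (-b) := by
                rw [Finset.sum_const, nsmul_eq_mul]
            _ ≤ _ := Finset.sum_le_sum hpt
        -- split opA
        have hsplit : opA G a (fun y => u y t') x'
            = (∑ y ∈ G.neighborFinset x', a x' y * (w x' t' - w y t'))
              + ε * ∑ y ∈ G.neighborFinset x', a x' y * (r x' - r y) := by
          rw [opA, Finset.mul_sum, ← Finset.sum_add_distrib]
          refine Finset.sum_congr rfl fun y hy => ?_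
          simp only [hwdef]
          ring
        -- the derivative of w x' at t'
        have hd2 : HasDerivAt (fun s : ℝ => N₀ + ε * (r x' + c * s + 1)) (ε * c) t' := by
          have h := (((((hasDerivAt_id t').const_mul c).const_add (r x')).add_const
            (1 : ℝ)).const_mul ε).const_add N₀
          simpa using h
        have hd : HasDerivWithinAt (w x')
            (-(opA G a (fun y => u y t') x') - ε * c) (Set.Ici (0:ℝ)) t' := by
          have := (hheat x' t' ht'mem.1).sub hd2.hasDerivWithinAt
          have heq : (fun s => u x' s - (N₀ + ε * (r x' + c * s + 1))) = w x' := by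
            funext s; simp only [hwdef]; ring
          rw [← heq]; exact this
        -- d is quite negative
        have hdneg : -(opA G a (fun y => u y t') x') - ε * c ≤ -ε := by
          rw [hsplit, hcdef]
          nlinarith
        -- but derivative at a left-approached max is nonneg
        have hmax : IsMaxOn (w x') (Set.Icc 0 t') t' := by
          intro s hs
          have h1 : w x' s ≤ g s := Finset.le_sup' (fun y => w y s) hx'B
          have h2 : g s ≤ g t' := ht'max ⟨hs.1, le_trans hs.2 ht'mem.2⟩
          simp only [Set.mem_setOf_eq]
          rw [hgt'] at h2
          exact le_trans h1 h2
        have hd' : HasDerivWithinAt (w x')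
            (-(opA G a (fun y => u y t') x') - ε * c) (Set.Icc 0 t') t' :=
          hd.mono (fun z hz => hz.1)
        have htan : (-t') ∈ posTangentConeAt (Set.Icc 0 t') t' := by
          apply mem_posTangentConeAt_of_segment_subset
          have : t' + -t' = (0:ℝ) := by ring
          rw [this, segment_symm, segment_eq_Icc ht'mem.1]
        have := hmax.localize.hasFDerivWithinAt_nonpos hd'.hasFDerivWithinAt htan
        simp only [ContinuousLinearMap.toSpanSingleton_apply,
          smul_eq_mul] at this
        nlinarith
    -- conclude
    have : u x t - N₀ - ε * (c * t + 1) < 0 := by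
      have := hwxt
      simp only [hwdef, hrx] at this
      linarith
    linarith
  -- let ε → 0
  by_contra hcon
  push_neg at hcon
  have hK : 0 < c * t + 1 := by positivity
  have h1 := key ((u x t - N₀) / (2 * (c * t + 1))) (div_pos (by linarith) (by positivity))
  have h2 : (u x t - N₀) / (2 * (c * t + 1)) * (c * t + 1) = (u x t - N₀) / 2 := by
    field_simp
  rw [h2] at h1
  linarith

/-- Bounded solutions of the heat equation Au + ∂u/∂t = 0 with initial data bounded by N₀
stay bounded by N₀; consequently bounded solutions of the initial value problem are unique. -/
theorem heat_uniqueness {V : Type*} (G : SimpleGraph V) [G.LocallyFinite] (hG : G.Connected)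
    (a : V → V → ℝ) (hsym : ∀ x y, a x y = a y x) (hpos : ∀ x y, G.Adj x y → 0 < a x y)
    (M : ℕ) (hdeg : ∀ x, G.degree x ≤ M) (aa : ℝ) (hub : ∀ x y, G.Adj x y → a x y ≤ aa)
    (u : V → ℝ → ℝ) (N₀ N₁ : ℝ)
    (hbdd : ∀ x t, 0 ≤ t → |u x t| ≤ N₁)
    (hheat : ∀ x t, 0 ≤ t →
      HasDerivWithinAt (u x) (-(opA G a (fun y => u y t) x)) (Set.Ici (0 : ℝ)) t)
    (hinit : ∀ x, |u x 0| ≤ N₀) :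
    (∀ x t, 0 ≤ t → |u x t| ≤ N₀) ∧
    ∀ v : V → ℝ → ℝ, (∃ N₂, ∀ x t, 0 ≤ t → |v x t| ≤ N₂) →
      (∀ x t, 0 ≤ t →
        HasDerivWithinAt (v x) (-(opA G a (fun y => v y t) x)) (Set.Ici (0 : ℝ)) t) →
      (∀ x, v x 0 = u x 0) → ∀ x t, 0 ≤ t → v x t = u x t := by
  classical
  have habs : ∀ (u : V → ℝ → ℝ) (N₀ N₁ : ℝ),
      (∀ x t, 0 ≤ t → |u x t| ≤ N₁) →
      (∀ x t, 0 ≤ t →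
        HasDerivWithinAt (u x) (-(opA G a (fun y => u y t) x)) (Set.Ici (0 : ℝ)) t) →
      (∀ x, |u x 0| ≤ N₀) → ∀ x t, 0 ≤ t → |u x t| ≤ N₀ := by
    intro u N₀ N₁ hbdd hheat hinit x t ht
    have hneg : ∀ x t, 0 ≤ t → HasDerivWithinAt (fun s => -(u x s))
        (-(opA G a (fun y => -(u y t)) x)) (Set.Ici (0 : ℝ)) t := by
      intro x t ht
      have h := (hheat x t ht).neg
      have heq : opA G a (fun y => -(u y t)) x = -(opA G a (fun y => u y t) x) := by
        rw [opA, opA, ← Finset.sum_neg_distrib]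
        exact Finset.sum_congr rfl fun y _ => by ring
      rw [heq]
      simpa [Pi.neg_def] using h
    have h1 := heat_le G hG a hpos M hdeg aa hub u N₀ N₁ hbdd hheat
      (fun x => (abs_le.mp (hinit x)).2) x t ht
    have h2 := heat_le G hG a hpos M hdeg aa hub (fun y s => -(u y s)) N₀ N₁
      (fun x t ht => by simpa using hbdd x t ht) hneg
      (fun x => neg_le.mp (abs_le.mp (hinit x)).1) x t ht
    rw [abs_le]
    constructor
    · simpa using neg_le_neg h2
    · exact h1
  refine ⟨habs u N₀ N₁ hbdd hheat hinit, ?_⟩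
  intro v hv hheatv hinitv x t ht
  obtain ⟨N₂, hN₂⟩ := hv
  have hdheat : ∀ x t, 0 ≤ t → HasDerivWithinAt (fun s => v x s - u x s)
      (-(opA G a (fun y => v y t - u y t) x)) (Set.Ici (0 : ℝ)) t := by
    intro x t ht
    have h := (hheatv x t ht).sub (hheat x t ht)
    have heq : opA G a (fun y => v y t - u y t) x
        = opA G a (fun y => v y t) x - opA G a (fun y => u y t) x := by
      rw [opA, opA, opA, ← Finset.sum_sub_distrib]
      exact Finset.sum_congr rfl fun y _ => by ring
    rw [heq]
    simp only [Pi.sub_def] at h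
    rw [show -(opA G a (fun y => v y t) x - opA G a (fun y => u y t) x) = -(opA G a (fun y => v y t) x) - -(opA G a (fun y => u y t) x) by ring]
    exact h
  have := habs (fun y s => v y s - u y s) 0 (N₂ + N₁)
    (fun x t ht => by
      calc |v x t - u x t| ≤ |v x t| + |u x t| := abs_sub _ _
        _ ≤ N₂ + N₁ := add_le_add (hN₂ x t ht) (hbdd x t ht))
    hdheat
    (fun x => by simp [hinitv x]) x t ht
  have h0 : |v x t - u x t| ≤ 0 := this
  have := abs_nonneg (v x t - u x t)
  have : |v x t - u x t| = 0 := le_antisymm h0 this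
  have := abs_eq_zero.mp this
  linarith
end
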